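/- Pruning exactly restricts the semantics to traces avoiding the pruned lifelines: for every ℓ ⊆ L and interactions i, i' ∈ I, if i ⤳ℓ i' then σ(i') = { t ∈ σ(i) | every action a occurring in t satisfies θ(a) ∉ ℓ }. -/

import Mathlib

/-- An atomic communication action: the emission (`isEmission = true`) or
reception (`isEmission = false`) of a message on a lifeline. -/
structure MyAction (L M : Type) where
  lifeline : L
  isEmission : Bool
  message : M

/-- Interaction terms: constants are actions and the empty interaction,
`loopS` is unary, and `strict`, `alt` and `cr ℓ` (for every `ℓ ⊆ L`) are binary.
`seq = cr ∅` and `par = cr Set.univ`. -/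
inductive Interaction (L M : Type) : Type where
  | empty : Interaction L M
  | act : MyAction L M → Interaction L M
  | loopS : Interaction L M → Interaction L M
  | strict : Interaction L M → Interaction L M → Interaction L M
  | alt : Interaction L M → Interaction L M → Interaction L M
  | cr : Set L → Interaction L M → Interaction L M → Interaction L M

namespace Interaction

variable {L M : Type}

/-- The evasion predicate `i ↓ ℓ`. -/
inductive Evades : Interaction L M → Set L → Prop where
  | empty (ℓ : Set L) : Evades .empty ℓ
  | act (a : MyAction L M) (ℓ : Set L) : a.lifeline ∉ ℓ → Evades (.act a) ℓ
  | altL {i1 i2 : Interaction L M} {ℓ} : Evades i1 ℓ → Evades (.alt i1 i2) ℓ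
  | altR {i1 i2 : Interaction L M} {ℓ} : Evades i2 ℓ → Evades (.alt i1 i2) ℓ
  | strict {i1 i2 : Interaction L M} {ℓ} : Evades i1 ℓ → Evades i2 ℓ →
      Evades (.strict i1 i2) ℓ
  | cr {i1 i2 : Interaction L M} {ℓ' ℓ} : Evades i1 ℓ → Evades i2 ℓ →
      Evades (.cr ℓ' i1 i2) ℓ
  | loopS (i1 : Interaction L M) (ℓ : Set L) : Evades (.loopS i1) ℓ

/-- The pruning relation `i ⤳ℓ i'`. -/
inductive Prune : Interaction L M → Set L → Interaction L M → Prop where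
  | empty (ℓ : Set L) : Prune .empty ℓ .empty
  | act (a : MyAction L M) (ℓ : Set L) : a.lifeline ∉ ℓ → Prune (.act a) ℓ (.act a)
  | altL {i1 i2 i1' : Interaction L M} {ℓ} : Prune i1 ℓ i1' → ¬ Evades i2 ℓ →
      Prune (.alt i1 i2) ℓ i1'
  | altR {i1 i2 i2' : Interaction L M} {ℓ} : Prune i2 ℓ i2' → ¬ Evades i1 ℓ →
      Prune (.alt i1 i2) ℓ i2'
  | altBoth {i1 i2 i1' i2' : Interaction L M} {ℓ} : Prune i1 ℓ i1' → Prune i2 ℓ i2' →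
      Prune (.alt i1 i2) ℓ (.alt i1' i2')
  | strict {i1 i2 i1' i2' : Interaction L M} {ℓ} : Prune i1 ℓ i1' → Prune i2 ℓ i2' →
      Prune (.strict i1 i2) ℓ (.strict i1' i2')
  | cr {i1 i2 i1' i2' : Interaction L M} {ℓ' ℓ} : Prune i1 ℓ i1' → Prune i2 ℓ i2' →
      Prune (.cr ℓ' i1 i2) ℓ (.cr ℓ' i1' i2')
  | loopS {i1 i1' : Interaction L M} {ℓ} : Prune i1 ℓ i1' →
      Prune (.loopS i1) ℓ (.loopS i1')
  | loopSElim {i1 : Interaction L M} {ℓ} : ¬ Evades i1 ℓ → Prune (.loopS i1) ℓ .empty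

/-- The non-expression predicate `i ̸→a`. -/
inductive NoExpr : Interaction L M → MyAction L M → Prop where
  | empty (a : MyAction L M) : NoExpr .empty a
  | act {a' a : MyAction L M} : a' ≠ a → NoExpr (.act a') a
  | loopS {i1 : Interaction L M} {a} : NoExpr i1 a → NoExpr (.loopS i1) a
  | strictNoEvade {i1 i2 : Interaction L M} {a} : NoExpr i1 a →
      ¬ Evades i1 Set.univ → NoExpr (.strict i1 i2) a
  | strictBoth {i1 i2 : Interaction L M} {a} : NoExpr i1 a →
      NoExpr i2 a → NoExpr (.strict i1 i2) a
  | crNoEvade {i1 i2 : Interaction L M} {ℓ a} : NoExpr i1 a →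
      ¬ Evades i1 ({a.lifeline} \ ℓ) → NoExpr (.cr ℓ i1 i2) a
  | crBoth {i1 i2 : Interaction L M} {ℓ a} : NoExpr i1 a →
      NoExpr i2 a → NoExpr (.cr ℓ i1 i2) a
  | alt {i1 i2 : Interaction L M} {a} : NoExpr i1 a → NoExpr i2 a →
      NoExpr (.alt i1 i2) a

/-- The execution relation `i →a i'`. -/
inductive Exec : Interaction L M → MyAction L M → Interaction L M → Prop where
  | act (a : MyAction L M) : Exec (.act a) a .empty
  | loop {i1 i1' : Interaction L M} {a} : Exec i1 a i1' →
      Exec (.loopS i1) a (.strict i1' (.loopS i1))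
  | strictL {i1 i2 i1' : Interaction L M} {a} : Exec i1 a i1' →
      Exec (.strict i1 i2) a (.strict i1' i2)
  | crL {i1 i2 i1' : Interaction L M} {ℓ a} : Exec i1 a i1' →
      Exec (.cr ℓ i1 i2) a (.cr ℓ i1' i2)
  | strictR {i1 i2 i2' : Interaction L M} {a} : Exec i2 a i2' → Evades i1 Set.univ →
      Exec (.strict i1 i2) a i2'
  | crR {i1 i2 i1' i2' : Interaction L M} {ℓ a} : Exec i2 a i2' →
      Prune i1 ({a.lifeline} \ ℓ) i1' → Exec (.cr ℓ i1 i2) a (.cr ℓ i1' i2')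
  | altChoiceL {i1 i2 i1' : Interaction L M} {a} : Exec i1 a i1' → NoExpr i2 a →
      Exec (.alt i1 i2) a i1'
  | altChoiceR {i1 i2 i2' : Interaction L M} {a} : Exec i2 a i2' → NoExpr i1 a →
      Exec (.alt i1 i2) a i2'
  | altDelay {i1 i2 i1' i2' : Interaction L M} {a} : Exec i1 a i1' → Exec i2 a i2' →
      Exec (.alt i1 i2) a (.alt i1' i2')

/-- The trace semantics `σ(i)`, as a predicate: `Sem i t` iff `t ∈ σ(i)`. -/
inductive Sem : Interaction L M → List (MyAction L M) → Prop where
  | nil {i : Interaction L M} : Evades i Set.univ → Sem i []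
  | cons {i i' : Interaction L M} {a t} : Exec i a i' → Sem i' t → Sem i (a :: t)

/-- One execution step: `i → i'` iff `i →a i'` for some action `a`. -/
def Step (i i' : Interaction L M) : Prop := ∃ a, Exec i a i'

/-- `reach i = { i' | i →* i' }`. -/
def Reach (i : Interaction L M) : Set (Interaction L M) :=
  {i' | Relation.ReflTransGen Step i i'}

/-- One-step rewriting by the simplification system `R`, closed under contexts. -/
inductive Rw : Interaction L M → Interaction L M → Prop where
  | strictEmptyL (x : Interaction L M) : Rw (.strict .empty x) x
  | strictEmptyR (x : Interaction L M) : Rw (.strict x .empty) x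
  | crEmptyL (ℓ : Set L) (x : Interaction L M) : Rw (.cr ℓ .empty x) x
  | crEmptyR (ℓ : Set L) (x : Interaction L M) : Rw (.cr ℓ x .empty) x
  | altEmptyLoop (x : Interaction L M) : Rw (.alt .empty (.loopS x)) (.loopS x)
  | altLoopEmpty (x : Interaction L M) : Rw (.alt (.loopS x) .empty) (.loopS x)
  | altEmptyEmpty : Rw (Interaction.alt (L := L) (M := M) .empty .empty) .empty
  | loopEmpty : Rw (Interaction.loopS (L := L) (M := M) .empty) .empty
  | loopCongr {i i' : Interaction L M} : Rw i i' → Rw (.loopS i) (.loopS i')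
  | strictCongrL {i1 i1' i2 : Interaction L M} : Rw i1 i1' →
      Rw (.strict i1 i2) (.strict i1' i2)
  | strictCongrR {i1 i2 i2' : Interaction L M} : Rw i2 i2' →
      Rw (.strict i1 i2) (.strict i1 i2')
  | altCongrL {i1 i1' i2 : Interaction L M} : Rw i1 i1' → Rw (.alt i1 i2) (.alt i1' i2)
  | altCongrR {i1 i2 i2' : Interaction L M} : Rw i2 i2' → Rw (.alt i1 i2) (.alt i1 i2')
  | crCongrL {i1 i1' i2 : Interaction L M} {ℓ} : Rw i1 i1' →
      Rw (.cr ℓ i1 i2) (.cr ℓ i1' i2)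
  | crCongrR {i1 i2 i2' : Interaction L M} {ℓ} : Rw i2 i2' →
      Rw (.cr ℓ i1 i2) (.cr ℓ i1 i2')

/-- A syntactic refinement order: `Le x y` means `y` is obtained from `x` by
adding alternative branches (and possibly replacing `∅` by loops). -/
inductive Le : Interaction L M → Interaction L M → Prop where
  | refl (i : Interaction L M) : Le i i
  | altIntroL {x y : Interaction L M} (z : Interaction L M) :
      Le x y → Le x (.alt y z)
  | altIntroR {x z : Interaction L M} (y : Interaction L M) :
      Le x z → Le x (.alt y z)
  | nilLoop (z : Interaction L M) : Le .empty (.loopS z)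
  | loopS {x y : Interaction L M} : Le x y → Le (.loopS x) (.loopS y)
  | strict {x1 y1 x2 y2 : Interaction L M} : Le x1 y1 → Le x2 y2 →
      Le (.strict x1 x2) (.strict y1 y2)
  | alt {x1 y1 x2 y2 : Interaction L M} : Le x1 y1 → Le x2 y2 →
      Le (.alt x1 x2) (.alt y1 y2)
  | cr (ℓ' : Set L) {x1 y1 x2 y2 : Interaction L M} : Le x1 y1 → Le x2 y2 →
      Le (.cr ℓ' x1 x2) (.cr ℓ' y1 y2)

variable {L M : Type}

/-- Evasion is antitone in the set of lifelines. -/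
theorem evades_anti {i : Interaction L M} {s' : Set L} (h : Evades i s') :
    ∀ {s : Set L}, s ⊆ s' → Evades i s := by
  induction h with
  | empty => exact fun _ => .empty _
  | act a _ ha => exact fun hss => .act _ _ fun hc => ha (hss hc)
  | altL _ ih => exact fun hss => .altL (ih hss)
  | altR _ ih => exact fun hss => .altR (ih hss)
  | strict _ _ ih1 ih2 => exact fun hss => .strict (ih1 hss) (ih2 hss)
  | cr _ _ ih1 ih2 => exact fun hss => .cr (ih1 hss) (ih2 hss)
  | loopS i1 _ => exact fun _ => .loopS _ _

/-- Pruning reflects evasion (for any set). -/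
theorem prune_rev_evades {i i' : Interaction L M} {s : Set L}
    (h : Prune i s i') : ∀ {u : Set L}, Evades i' u → Evades i u := by
  induction h with
  | empty => exact fun he => he
  | act => exact fun he => he
  | altL _ _ ih => exact fun he => .altL (ih he)
  | altR _ _ ih => exact fun he => .altR (ih he)
  | altBoth _ _ ih1 ih2 => intro u he; cases he with
    | altL h => exact .altL (ih1 h)
    | altR h => exact .altR (ih2 h)
  | strict _ _ ih1 ih2 => intro u he; cases he with
    | strict h1 h2 => exact .strict (ih1 h1) (ih2 h2)
  | cr _ _ ih1 ih2 => intro u he; cases he with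
    | cr h1 h2 => exact .cr (ih1 h1) (ih2 h2)
  | loopS _ _ => exact fun _ => .loopS _ _
  | loopSElim _ => exact fun _ => .loopS _ _

/-- Pruning preserves evasion of the universal set. -/
theorem prune_evades_univ {i i' : Interaction L M} {ℓ : Set L}
    (h : Prune i ℓ i') (he : Evades i Set.univ) : Evades i' Set.univ := by
  induction h with
  | empty => exact he
  | act => exact he
  | altL _ h2 ih => cases he with
    | altL h => exact ih h
    | altR h => exact absurd (evades_anti h (Set.subset_univ _)) h2
  | altR _ h1 ih => cases he with
    | altL h => exact absurd (evades_anti h (Set.subset_univ _)) h1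
    | altR h => exact ih h
  | altBoth _ _ ih1 ih2 => cases he with
    | altL h => exact .altL (ih1 h)
    | altR h => exact .altR (ih2 h)
  | strict _ _ ih1 ih2 => cases he with
    | strict h1 h2 => exact .strict (ih1 h1) (ih2 h2)
  | cr _ _ ih1 ih2 => cases he with
    | cr h1 h2 => exact .cr (ih1 h1) (ih2 h2)
  | loopS _ _ => exact .loopS _ _
  | loopSElim _ => exact .empty _

/-- Any interaction evading `s` can be pruned by `s`. -/
theorem prune_total (i : Interaction L M) :
    ∀ {s : Set L}, Evades i s → ∃ i', Prune i s i' := by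
  induction i with
  | empty => exact fun _ => ⟨.empty, .empty _⟩
  | act a => intro s h; cases h with
    | act _ _ ha => exact ⟨.act a, .act a s ha⟩
  | loopS i1 ih =>
    intro s _
    by_cases h1 : Evades i1 s
    · obtain ⟨j, hj⟩ := ih h1; exact ⟨_, .loopS hj⟩
    · exact ⟨_, .loopSElim h1⟩
  | strict i1 i2 ih1 ih2 => intro s h; cases h with
    | strict h1 h2 =>
      obtain ⟨j1, hj1⟩ := ih1 h1; obtain ⟨j2, hj2⟩ := ih2 h2
      exact ⟨_, .strict hj1 hj2⟩
  | cr ℓ' i1 i2 ih1 ih2 => intro s h; cases h with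
    | cr h1 h2 =>
      obtain ⟨j1, hj1⟩ := ih1 h1; obtain ⟨j2, hj2⟩ := ih2 h2
      exact ⟨_, .cr hj1 hj2⟩
  | alt i1 i2 ih1 ih2 =>
    intro s h
    by_cases h1 : Evades i1 s <;> by_cases h2 : Evades i2 s
    · obtain ⟨j1, hj1⟩ := ih1 h1; obtain ⟨j2, hj2⟩ := ih2 h2
      exact ⟨_, .altBoth hj1 hj2⟩
    · obtain ⟨j1, hj1⟩ := ih1 h1; exact ⟨_, .altL hj1 h2⟩
    · obtain ⟨j2, hj2⟩ := ih2 h2; exact ⟨_, .altR hj2 h1⟩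
    · cases h with
      | altL h => exact absurd h h1
      | altR h => exact absurd h h2

/-- Totality: either an interaction can express an action, or `NoExpr` holds. -/
theorem noexpr_total (i : Interaction L M) (a : MyAction L M) :
    (∃ i', Exec i a i') ∨ NoExpr i a := by
  induction i with
  | empty => exact .inr (.empty a)
  | act a' =>
    by_cases h : a' = a
    · subst h; exact .inl ⟨_, .act a'⟩
    · exact .inr (.act h)
  | loopS i1 ih =>
    rcases ih with ⟨j, hj⟩ | hn
    · exact .inl ⟨_, .loop hj⟩
    · exact .inr (.loopS hn)
  | strict i1 i2 ih1 ih2 =>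
    rcases ih1 with ⟨j, hj⟩ | hn1
    · exact .inl ⟨_, .strictL hj⟩
    · by_cases he : Evades i1 Set.univ
      · rcases ih2 with ⟨j, hj⟩ | hn2
        · exact .inl ⟨_, .strictR hj he⟩
        · exact .inr (.strictBoth hn1 hn2)
      · exact .inr (.strictNoEvade hn1 he)
  | cr ℓ' i1 i2 ih1 ih2 =>
    rcases ih1 with ⟨j, hj⟩ | hn1
    · exact .inl ⟨_, .crL hj⟩
    · by_cases he : Evades i1 ({a.lifeline} \ ℓ')
      · rcases ih2 with ⟨j, hj⟩ | hn2
        · obtain ⟨i1p, hp⟩ := prune_total i1 he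
          exact .inl ⟨_, .crR hj hp⟩
        · exact .inr (.crBoth hn1 hn2)
      · exact .inr (.crNoEvade hn1 he)
  | alt i1 i2 ih1 ih2 =>
    rcases ih1 with ⟨j1, hj1⟩ | hn1 <;> rcases ih2 with ⟨j2, hj2⟩ | hn2
    · exact .inl ⟨_, .altDelay hj1 hj2⟩
    · exact .inl ⟨_, .altChoiceL hj1 hn2⟩
    · exact .inl ⟨_, .altChoiceR hj2 hn1⟩
    · exact .inr (.alt hn1 hn2)

/-- If `i` executes an action outside `ℓ` to an `ℓ`-evading remainder,
then `i` evades `ℓ`. -/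
theorem evades_of_exec {i i0 : Interaction L M} {a : MyAction L M} {ℓ : Set L}
    (h : Exec i a i0) : a.lifeline ∉ ℓ → Evades i0 ℓ → Evades i ℓ := by
  induction h with
  | act _ => exact fun ha _ => .act _ _ ha
  | loop _ _ => exact fun _ _ => .loopS _ _
  | strictL _ ih => intro ha he; cases he with
    | strict h1 h2 => exact .strict (ih ha h1) h2
  | crL _ ih => intro ha he; cases he with
    | cr h1 h2 => exact .cr (ih ha h1) h2
  | strictR _ hev ih =>
    exact fun ha he => .strict (evades_anti hev (Set.subset_univ _)) (ih ha he)
  | crR _ hp ih => intro ha he; cases he with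
    | cr h1 h2 => exact .cr (prune_rev_evades hp h1) (ih ha h2)
  | altChoiceL _ _ ih => exact fun ha he => .altL (ih ha he)
  | altChoiceR _ _ ih => exact fun ha he => .altR (ih ha he)
  | altDelay _ _ ih1 ih2 => intro ha he; cases he with
    | altL h => exact .altL (ih1 ha h)
    | altR h => exact .altR (ih2 ha h)

/-- Pruning preserves non-expression. -/
theorem noexpr_prune {i i' : Interaction L M} {ℓ : Set L} {a : MyAction L M}
    (h : Prune i ℓ i') : NoExpr i a → NoExpr i' a := by
  induction h with
  | empty => exact fun hn => hn
  | act => exact fun hn => hn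
  | altL _ _ ih => intro hn; cases hn with
    | alt h1 h2 => exact ih h1
  | altR _ _ ih => intro hn; cases hn with
    | alt h1 h2 => exact ih h2
  | altBoth _ _ ih1 ih2 => intro hn; cases hn with
    | alt h1 h2 => exact .alt (ih1 h1) (ih2 h2)
  | strict hp1 _ ih1 ih2 => intro hn; cases hn with
    | strictNoEvade h1 hne =>
      exact .strictNoEvade (ih1 h1) fun hc => hne (prune_rev_evades hp1 hc)
    | strictBoth h1 h2 => exact .strictBoth (ih1 h1) (ih2 h2)
  | cr hp1 _ ih1 ih2 => intro hn; cases hn with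
    | crNoEvade h1 hne =>
      exact .crNoEvade (ih1 h1) fun hc => hne (prune_rev_evades hp1 hc)
    | crBoth h1 h2 => exact .crBoth (ih1 h1) (ih2 h2)
  | loopS _ ih => intro hn; cases hn with
    | loopS h1 => exact .loopS (ih h1)
  | loopSElim _ => exact fun _ => .empty a

/-- Swapping lemma for two prunings of the same interaction. -/
theorem evades_swap {i j : Interaction L M} {ℓ s : Set L}
    (hj : Prune i ℓ j) : ∀ {k : Interaction L M}, Prune i s k →
      Evades j s → Evades k ℓ := by
  induction hj with
  | empty => intro k hk _; cases hk; exact .empty _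
  | act a _ ha => intro k hk _; cases hk; exact .act _ _ ha
  | altL hp1 h2 ih =>
    intro k hk hje; cases hk with
    | altL hk1 _ => exact ih hk1 hje
    | altR hk2 hn1 => exact absurd (prune_rev_evades hp1 hje) hn1
    | altBoth hk1 hk2 => exact .altL (ih hk1 hje)
  | altR hp2 h1 ih =>
    intro k hk hje; cases hk with
    | altL hk1 hn2 => exact absurd (prune_rev_evades hp2 hje) hn2
    | altR hk2 _ => exact ih hk2 hje
    | altBoth hk1 hk2 => exact .altR (ih hk2 hje)
  | altBoth hp1 hp2 ih1 ih2 =>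
    intro k hk hje; cases hk with
    | altL hk1 hn2 => cases hje with
      | altL h => exact ih1 hk1 h
      | altR h => exact absurd (prune_rev_evades hp2 h) hn2
    | altR hk2 hn1 => cases hje with
      | altL h => exact absurd (prune_rev_evades hp1 h) hn1
      | altR h => exact ih2 hk2 h
    | altBoth hk1 hk2 => cases hje with
      | altL h => exact .altL (ih1 hk1 h)
      | altR h => exact .altR (ih2 hk2 h)
  | strict hp1 hp2 ih1 ih2 =>
    intro k hk hje; cases hk with
    | strict hk1 hk2 => cases hje with
      | strict h1 h2 => exact .strict (ih1 hk1 h1) (ih2 hk2 h2)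
  | cr hp1 hp2 ih1 ih2 =>
    intro k hk hje; cases hk with
    | cr hk1 hk2 => cases hje with
      | cr h1 h2 => exact .cr (ih1 hk1 h1) (ih2 hk2 h2)
  | loopS _ _ =>
    intro k hk _; cases hk with
    | loopS _ => exact .loopS _ _
    | loopSElim _ => exact .empty _
  | loopSElim _ =>
    intro k hk _; cases hk with
    | loopS _ => exact .loopS _ _
    | loopSElim _ => exact .empty _

/-- Parallel prunings can be joined, provided the `s`-pruning evades `ℓ`. -/
theorem prune_comm {i j : Interaction L M} {ℓ s : Set L}
    (hj : Prune i ℓ j) : ∀ {k : Interaction L M}, Prune i s k → Evades k ℓ →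
      ∃ q, Prune j s q ∧ Prune k ℓ q := by
  induction hj with
  | empty => intro k hk _; cases hk; exact ⟨.empty, .empty _, .empty _⟩
  | act a _ ha =>
    intro k hk _; cases hk with
    | act _ _ ha' => exact ⟨.act a, .act a _ ha', .act a _ ha⟩
  | altL hp1 hn2 ih =>
    intro k hk hke; cases hk with
    | altL hk1 _ => exact ih hk1 hke
    | altR hk2 _ => exact absurd (prune_rev_evades hk2 hke) hn2
    | altBoth hk1 hk2 =>
      cases hke with
      | altL h =>
        obtain ⟨q, hq1, hq2⟩ := ih hk1 h
        exact ⟨q, hq1, .altL hq2 fun hc => hn2 (prune_rev_evades hk2 hc)⟩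
      | altR h => exact absurd (prune_rev_evades hk2 h) hn2
  | altR hp2 hn1 ih =>
    intro k hk hke; cases hk with
    | altL hk1 _ => exact absurd (prune_rev_evades hk1 hke) hn1
    | altR hk2 _ => exact ih hk2 hke
    | altBoth hk1 hk2 =>
      cases hke with
      | altL h => exact absurd (prune_rev_evades hk1 h) hn1
      | altR h =>
        obtain ⟨q, hq1, hq2⟩ := ih hk2 h
        exact ⟨q, hq1, .altR hq2 fun hc => hn1 (prune_rev_evades hk1 hc)⟩
  | altBoth hp1 hp2 ih1 ih2 =>
    intro k hk hke; cases hk with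
    | altL hk1 hn2 =>
      obtain ⟨q, hq1, hq2⟩ := ih1 hk1 hke
      exact ⟨q, .altL hq1 fun hc => hn2 (prune_rev_evades hp2 hc), hq2⟩
    | altR hk2 hn1 =>
      obtain ⟨q, hq1, hq2⟩ := ih2 hk2 hke
      exact ⟨q, .altR hq1 fun hc => hn1 (prune_rev_evades hp1 hc), hq2⟩
    | altBoth hk1 hk2 =>
      rename_i lp k1 k2
      cases hke with
      | altL h =>
        obtain ⟨q1, hq11, hq12⟩ := ih1 hk1 h
        by_cases h2 : Evades k2 lp
        · obtain ⟨q2, hq21, hq22⟩ := ih2 hk2 h2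
          exact ⟨.alt q1 q2, .altBoth hq11 hq21, .altBoth hq12 hq22⟩
        · refine ⟨q1, .altL hq11 fun hc => ?_, .altL hq12 h2⟩
          exact h2 (evades_swap hp2 hk2 hc)
      | altR h =>
        obtain ⟨q2, hq21, hq22⟩ := ih2 hk2 h
        by_cases h1 : Evades k1 lp
        · obtain ⟨q1, hq11, hq12⟩ := ih1 hk1 h1
          exact ⟨.alt q1 q2, .altBoth hq11 hq21, .altBoth hq12 hq22⟩
        · refine ⟨q2, .altR hq21 fun hc => ?_, .altR hq22 h1⟩
          exact h1 (evades_swap hp1 hk1 hc)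
  | strict hp1 hp2 ih1 ih2 =>
    intro k hk hke; cases hk with
    | strict hk1 hk2 =>
      cases hke with
      | strict h1 h2 =>
        obtain ⟨q1, hq11, hq12⟩ := ih1 hk1 h1
        obtain ⟨q2, hq21, hq22⟩ := ih2 hk2 h2
        exact ⟨.strict q1 q2, .strict hq11 hq21, .strict hq12 hq22⟩
  | cr hp1 hp2 ih1 ih2 =>
    intro k hk hke; cases hk with
    | cr hk1 hk2 =>
      cases hke with
      | cr h1 h2 =>
        obtain ⟨q1, hq11, hq12⟩ := ih1 hk1 h1
        obtain ⟨q2, hq21, hq22⟩ := ih2 hk2 h2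
        exact ⟨.cr _ q1 q2, .cr hq11 hq21, .cr hq12 hq22⟩
  | loopS hp1 ih =>
    intro k hk hke; cases hk with
    | loopS hk1 =>
      clear hke
      rename_i lp k1
      by_cases h1 : Evades k1 lp
      · obtain ⟨q1, hq11, hq12⟩ := ih hk1 h1
        exact ⟨.loopS q1, .loopS hq11, .loopS hq12⟩
      · refine ⟨.empty, .loopSElim fun hc => ?_, .loopSElim h1⟩
        exact h1 (evades_swap hp1 hk1 hc)
    | loopSElim hn1 =>
      refine ⟨.empty, .loopSElim fun hc => hn1 (prune_rev_evades hp1 hc), .empty _⟩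
  | loopSElim hn1 =>
    intro k hk _; cases hk with
    | loopS hk1 =>
      exact ⟨.empty, .empty _, .loopSElim fun hc => hn1 (prune_rev_evades hk1 hc)⟩
    | loopSElim _ => exact ⟨.empty, .empty _, .empty _⟩

/-- Commuting a `ℓ`-pruning followed by an `s`-pruning. -/
theorem prune_comm_seq {x y : Interaction L M} {ℓ : Set L}
    (hxy : Prune x ℓ y) : ∀ {s : Set L} {z : Interaction L M}, Prune y s z →
      ∃ w w', Prune x s w ∧ Prune w ℓ w' ∧ Le z w' := by
  induction hxy with
  | empty => intro s z hz; cases hz; exact ⟨.empty, .empty, .empty _, .empty _, .refl _⟩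
  | act a _ ha =>
    intro s z hz; cases hz with
    | act _ _ ha' => exact ⟨.act a, .act a, .act a _ ha', .act a _ ha, .refl _⟩
  | altL hp1 hn2 ih =>
    rename_i x1 x2 y lp
    intro s z hz
    obtain ⟨w1, w1', p1, p1', hle⟩ := ih hz
    by_cases h2 : Evades x2 s
    · obtain ⟨x2s, hx2s⟩ := prune_total x2 h2
      refine ⟨.alt w1 x2s, w1', .altBoth p1 hx2s,
        .altL p1' fun hc => hn2 (prune_rev_evades hx2s hc), hle⟩
    · exact ⟨w1, w1', .altL p1 h2, p1', hle⟩
  | altR hp2 hn1 ih =>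
    rename_i x1 x2 w lp
    intro s z hz
    obtain ⟨w2, w2', p2, p2', hle⟩ := ih hz
    by_cases h1 : Evades x1 s
    · obtain ⟨x1s, hx1s⟩ := prune_total x1 h1
      refine ⟨.alt x1s w2, w2', .altBoth hx1s p2,
        .altR p2' fun hc => hn1 (prune_rev_evades hx1s hc), hle⟩
    · exact ⟨w2, w2', .altR p2 h1, p2', hle⟩
  | altBoth hp1 hp2 ih1 ih2 =>
    rename_i x1 x2 y1 y2 lp
    intro s z hz; cases hz with
    | altL hz1 hny2 =>
      obtain ⟨w1, w1', p1, p1', hle⟩ := ih1 hz1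
      by_cases h2 : Evades x2 s
      · obtain ⟨x2s, hx2s⟩ := prune_total x2 h2
        by_cases h2l : Evades x2s lp
        · obtain ⟨x2sp, hx2sp⟩ := prune_total x2s h2l
          exact ⟨.alt w1 x2s, .alt w1' x2sp, .altBoth p1 hx2s,
            .altBoth p1' hx2sp, .altIntroL _ hle⟩
        · exact ⟨.alt w1 x2s, w1', .altBoth p1 hx2s, .altL p1' h2l, hle⟩
      · exact ⟨w1, w1', .altL p1 h2, p1', hle⟩
    | altR hz2 hny1 =>
      obtain ⟨w2, w2', p2, p2', hle⟩ := ih2 hz2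
      by_cases h1 : Evades x1 s
      · obtain ⟨x1s, hx1s⟩ := prune_total x1 h1
        by_cases h1l : Evades x1s lp
        · obtain ⟨x1sp, hx1sp⟩ := prune_total x1s h1l
          exact ⟨.alt x1s w2, .alt x1sp w2', .altBoth hx1s p2,
            .altBoth hx1sp p2', .altIntroR _ hle⟩
        · exact ⟨.alt x1s w2, w2', .altBoth hx1s p2, .altR p2' h1l, hle⟩
      · exact ⟨w2, w2', .altR p2 h1, p2', hle⟩
    | altBoth hz1 hz2 =>
      obtain ⟨w1, w1', p1, p1', hle1⟩ := ih1 hz1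
      obtain ⟨w2, w2', p2, p2', hle2⟩ := ih2 hz2
      exact ⟨.alt w1 w2, .alt w1' w2', .altBoth p1 p2, .altBoth p1' p2',
        .alt hle1 hle2⟩
  | strict hp1 hp2 ih1 ih2 =>
    intro s z hz; cases hz with
    | strict hz1 hz2 =>
      obtain ⟨w1, w1', p1, p1', hle1⟩ := ih1 hz1
      obtain ⟨w2, w2', p2, p2', hle2⟩ := ih2 hz2
      exact ⟨.strict w1 w2, .strict w1' w2', .strict p1 p2, .strict p1' p2',
        .strict hle1 hle2⟩
  | cr hp1 hp2 ih1 ih2 =>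
    intro s z hz; cases hz with
    | cr hz1 hz2 =>
      obtain ⟨w1, w1', p1, p1', hle1⟩ := ih1 hz1
      obtain ⟨w2, w2', p2, p2', hle2⟩ := ih2 hz2
      exact ⟨.cr _ w1 w2, .cr _ w1' w2', .cr p1 p2, .cr p1' p2', .cr _ hle1 hle2⟩
  | loopS hp1 ih =>
    rename_i x1 y1 lp
    intro s z hz; cases hz with
    | loopS hz1 =>
      obtain ⟨w1, w1', p1, p1', hle⟩ := ih hz1
      exact ⟨.loopS w1, .loopS w1', .loopS p1, .loopS p1', .loopS hle⟩
    | loopSElim hny1 =>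
      by_cases h1 : Evades x1 s
      · obtain ⟨x1s, hx1s⟩ := prune_total x1 h1
        by_cases h1l : Evades x1s lp
        · obtain ⟨x1sp, hx1sp⟩ := prune_total x1s h1l
          exact ⟨.loopS x1s, .loopS x1sp, .loopS hx1s, .loopS hx1sp, .nilLoop _⟩
        · exact ⟨.loopS x1s, .empty, .loopS hx1s, .loopSElim h1l, .refl _⟩
      · exact ⟨.empty, .empty, .loopSElim h1, .empty _, .refl _⟩
  | loopSElim hn1 =>
    rename_i x1 lp
    intro s z hz; cases hz
    by_cases h1 : Evades x1 s
    · obtain ⟨x1s, hx1s⟩ := prune_total x1 h1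
      exact ⟨.loopS x1s, .empty, .loopS hx1s,
        .loopSElim fun hc => hn1 (prune_rev_evades hx1s hc), .refl _⟩
    · exact ⟨.empty, .empty, .loopSElim h1, .empty _, .refl _⟩

/-- `Le` preserves evasion. -/
theorem le_evades {x y : Interaction L M} (h : Le x y) :
    ∀ {s : Set L}, Evades x s → Evades y s := by
  induction h with
  | refl _ => exact fun he => he
  | altIntroL _ _ ih => exact fun he => .altL (ih he)
  | altIntroR _ _ ih => exact fun he => .altR (ih he)
  | nilLoop _ => exact fun _ => .loopS _ _
  | loopS _ _ => exact fun _ => .loopS _ _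
  | strict _ _ ih1 ih2 => intro s he; cases he with
    | strict h1 h2 => exact .strict (ih1 h1) (ih2 h2)
  | alt _ _ ih1 ih2 => intro s he; cases he with
    | altL h1 => exact .altL (ih1 h1)
    | altR h2 => exact .altR (ih2 h2)
  | cr _ _ _ ih1 ih2 => intro s he; cases he with
    | cr h1 h2 => exact .cr (ih1 h1) (ih2 h2)

/-- `Le` is simulated by pruning. -/
theorem le_prune {x y : Interaction L M} (h : Le x y) :
    ∀ {s : Set L} {xp : Interaction L M}, Prune x s xp →
      ∃ yp, Prune y s yp ∧ Le xp yp := by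
  induction h with
  | refl _ => exact fun hp => ⟨_, hp, .refl _⟩
  | altIntroL z h ih =>
    intro s xp hp
    obtain ⟨yp, hyp, hle⟩ := ih hp
    by_cases hz : Evades z s
    · obtain ⟨zp, hzp⟩ := prune_total z hz
      exact ⟨.alt yp zp, .altBoth hyp hzp, .altIntroL _ hle⟩
    · exact ⟨yp, .altL hyp hz, hle⟩
  | altIntroR y h ih =>
    intro s xp hp
    obtain ⟨zp, hzp, hle⟩ := ih hp
    by_cases hy : Evades y s
    · obtain ⟨yp, hyp⟩ := prune_total y hy
      exact ⟨.alt yp zp, .altBoth hyp hzp, .altIntroR _ hle⟩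
    · exact ⟨zp, .altR hzp hy, hle⟩
  | nilLoop z =>
    intro s xp hp; cases hp
    by_cases hz : Evades z s
    · obtain ⟨zp, hzp⟩ := prune_total z hz
      exact ⟨.loopS zp, .loopS hzp, .nilLoop _⟩
    · exact ⟨.empty, .loopSElim hz, .refl _⟩
  | loopS h ih =>
    rename_i x1 y1
    intro s xp hp; cases hp with
    | loopS hp1 =>
      obtain ⟨yp1, hyp1, hle⟩ := ih hp1
      exact ⟨.loopS yp1, .loopS hyp1, .loopS hle⟩
    | loopSElim hn1 =>
      by_cases hy : Evades y1 s
      · obtain ⟨yp1, hyp1⟩ := prune_total y1 hy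
        exact ⟨.loopS yp1, .loopS hyp1, .nilLoop _⟩
      · exact ⟨.empty, .loopSElim hy, .refl _⟩
  | strict h1 h2 ih1 ih2 =>
    intro s xp hp; cases hp with
    | strict hp1 hp2 =>
      obtain ⟨y1p, hy1p, hle1⟩ := ih1 hp1
      obtain ⟨y2p, hy2p, hle2⟩ := ih2 hp2
      exact ⟨.strict y1p y2p, .strict hy1p hy2p, .strict hle1 hle2⟩
  | cr ℓ' h1 h2 ih1 ih2 =>
    intro s xp hp; cases hp with
    | cr hp1 hp2 =>
      obtain ⟨y1p, hy1p, hle1⟩ := ih1 hp1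
      obtain ⟨y2p, hy2p, hle2⟩ := ih2 hp2
      exact ⟨.cr ℓ' y1p y2p, .cr hy1p hy2p, .cr ℓ' hle1 hle2⟩
  | alt h1 h2 ih1 ih2 =>
    rename_i x1 y1 x2 y2
    intro s xp hp; cases hp with
    | altL hp1 hn2 =>
      obtain ⟨y1p, hy1p, hle1⟩ := ih1 hp1
      by_cases hy2 : Evades y2 s
      · obtain ⟨y2p, hy2p⟩ := prune_total y2 hy2
        exact ⟨.alt y1p y2p, .altBoth hy1p hy2p, .altIntroL _ hle1⟩
      · exact ⟨y1p, .altL hy1p hy2, hle1⟩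
    | altR hp2 hn1 =>
      obtain ⟨y2p, hy2p, hle2⟩ := ih2 hp2
      by_cases hy1 : Evades y1 s
      · obtain ⟨y1p, hy1p⟩ := prune_total y1 hy1
        exact ⟨.alt y1p y2p, .altBoth hy1p hy2p, .altIntroR _ hle2⟩
      · exact ⟨y2p, .altR hy2p hy1, hle2⟩
    | altBoth hp1 hp2 =>
      obtain ⟨y1p, hy1p, hle1⟩ := ih1 hp1
      obtain ⟨y2p, hy2p, hle2⟩ := ih2 hp2
      exact ⟨.alt y1p y2p, .altBoth hy1p hy2p, .alt hle1 hle2⟩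

/-- `Le` is a simulation for execution. -/
theorem le_exec {x y : Interaction L M} (h : Le x y) :
    ∀ {a : MyAction L M} {x' : Interaction L M}, Exec x a x' →
      ∃ y', Exec y a y' ∧ Le x' y' := by
  induction h with
  | refl _ => exact fun hx => ⟨_, hx, .refl _⟩
  | altIntroL z h ih =>
    intro a x' hx
    obtain ⟨y1, hy1, hle⟩ := ih hx
    rcases noexpr_total z a with ⟨z', hz⟩ | hn
    · exact ⟨.alt y1 z', .altDelay hy1 hz, .altIntroL _ hle⟩
    · exact ⟨y1, .altChoiceL hy1 hn, hle⟩
  | altIntroR y h ih =>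
    intro a x' hx
    obtain ⟨z1, hz1, hle⟩ := ih hx
    rcases noexpr_total y a with ⟨y', hy⟩ | hn
    · exact ⟨.alt y' z1, .altDelay hy hz1, .altIntroR _ hle⟩
    · exact ⟨z1, .altChoiceR hz1 hn, hle⟩
  | nilLoop z => intro a x' hx; cases hx
  | loopS h ih =>
    intro a x' hx; cases hx with
    | loop hx1 =>
      obtain ⟨y1', hy1, hle⟩ := ih hx1
      exact ⟨_, .loop hy1, .strict hle (.loopS h)⟩
  | strict h1 h2 ih1 ih2 =>
    intro a x' hx; cases hx with
    | strictL hx1 =>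
      obtain ⟨y1', hy1, hle⟩ := ih1 hx1
      exact ⟨_, .strictL hy1, .strict hle h2⟩
    | strictR hx2 hev =>
      obtain ⟨y2', hy2, hle⟩ := ih2 hx2
      exact ⟨y2', .strictR hy2 (le_evades h1 hev), hle⟩
  | cr ℓ' h1 h2 ih1 ih2 =>
    intro a x' hx; cases hx with
    | crL hx1 =>
      obtain ⟨y1', hy1, hle⟩ := ih1 hx1
      exact ⟨_, .crL hy1, .cr ℓ' hle h2⟩
    | crR hx2 hp =>
      obtain ⟨y1p, hy1p, hlep⟩ := le_prune h1 hp
      obtain ⟨y2', hy2, hle2⟩ := ih2 hx2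
      exact ⟨_, .crR hy2 hy1p, .cr ℓ' hlep hle2⟩
  | alt h1 h2 ih1 ih2 =>
    rename_i x1 y1 x2 y2
    intro a x' hx; cases hx with
    | altChoiceL hx1 hn2 =>
      obtain ⟨y1', hy1, hle⟩ := ih1 hx1
      rcases noexpr_total y2 a with ⟨y2', hy2⟩ | hn
      · exact ⟨.alt y1' y2', .altDelay hy1 hy2, .altIntroL _ hle⟩
      · exact ⟨y1', .altChoiceL hy1 hn, hle⟩
    | altChoiceR hx2 hn1 =>
      obtain ⟨y2', hy2, hle⟩ := ih2 hx2
      rcases noexpr_total y1 a with ⟨y1', hy1⟩ | hn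
      · exact ⟨.alt y1' y2', .altDelay hy1 hy2, .altIntroR _ hle⟩
      · exact ⟨y2', .altChoiceR hy2 hn, hle⟩
    | altDelay hx1 hx2 =>
      obtain ⟨y1', hy1, hle1⟩ := ih1 hx1
      obtain ⟨y2', hy2, hle2⟩ := ih2 hx2
      exact ⟨.alt y1' y2', .altDelay hy1 hy2, .alt hle1 hle2⟩

/-- `Le` implies trace inclusion. -/
theorem le_sem {x : Interaction L M} {t : List (MyAction L M)} (hs : Sem x t) :
    ∀ {y : Interaction L M}, Le x y → Sem y t := by
  induction hs with
  | nil he => exact fun hle => .nil (le_evades hle he)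
  | cons hx _ ih =>
    intro y hle
    obtain ⟨y', hy, hle'⟩ := le_exec hle hx
    exact .cons hy (ih hle')

/-- A trace that avoids `ℓ` forces evasion of `ℓ`. -/
theorem sem_evades {i : Interaction L M} {t : List (MyAction L M)} {ℓ : Set L}
    (hs : Sem i t) (hav : ∀ a ∈ t, a.lifeline ∉ ℓ) : Evades i ℓ := by
  induction hs with
  | nil he => exact evades_anti he (Set.subset_univ _)
  | cons hx _ ih =>
    exact evades_of_exec hx (hav _ List.mem_cons_self)
      (ih fun b hb => hav b (List.mem_cons_of_mem _ hb))

/-- Forward one-step simulation: an execution of a pruned interaction lifts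
to an execution of the original. -/
theorem prune_exec_fwd {i i' : Interaction L M} {ℓ : Set L}
    (h : Prune i ℓ i') : ∀ {a : MyAction L M} {j : Interaction L M},
      Exec i' a j → ∃ i0 j', Exec i a i0 ∧ Prune i0 ℓ j' ∧ Le j j' ∧
        a.lifeline ∉ ℓ := by
  induction h with
  | empty => intro a j hx; cases hx
  | act a' _ ha =>
    intro a j hx; cases hx
    exact ⟨.empty, .empty, .act a', .empty _, .refl _, ha⟩
  | altL hp1 hn2 ih =>
    rename_i i1 i2 i1' lp
    intro a j hx
    obtain ⟨i10, j', hx1, hpj, hle, ha⟩ := ih hx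
    rcases noexpr_total i2 a with ⟨i2x, hx2⟩ | hn
    · by_cases h2 : Evades i2x lp
      · obtain ⟨i2xp, hp2⟩ := prune_total i2x h2
        exact ⟨.alt i10 i2x, .alt j' i2xp, .altDelay hx1 hx2,
          .altBoth hpj hp2, .altIntroL _ hle, ha⟩
      · exact ⟨.alt i10 i2x, j', .altDelay hx1 hx2, .altL hpj h2, hle, ha⟩
    · exact ⟨i10, j', .altChoiceL hx1 hn, hpj, hle, ha⟩
  | altR hp2 hn1 ih =>
    rename_i i1 i2 i2' lp
    intro a j hx
    obtain ⟨i20, j', hx2, hpj, hle, ha⟩ := ih hx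
    rcases noexpr_total i1 a with ⟨i1x, hx1⟩ | hn
    · by_cases h1 : Evades i1x lp
      · obtain ⟨i1xp, hp1⟩ := prune_total i1x h1
        exact ⟨.alt i1x i20, .alt i1xp j', .altDelay hx1 hx2,
          .altBoth hp1 hpj, .altIntroR _ hle, ha⟩
      · exact ⟨.alt i1x i20, j', .altDelay hx1 hx2, .altR hpj h1, hle, ha⟩
    · exact ⟨i20, j', .altChoiceR hx2 hn, hpj, hle, ha⟩
  | altBoth hp1 hp2 ih1 ih2 =>
    rename_i i1 i2 i1p i2p lp
    intro a j hx; cases hx with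
    | altChoiceL hx1 hn2 =>
      obtain ⟨i10, j', hx1', hpj, hle, ha⟩ := ih1 hx1
      rcases noexpr_total i2 a with ⟨i2x, hx2⟩ | hn
      · by_cases h2 : Evades i2x lp
        · obtain ⟨i2xp, hq2⟩ := prune_total i2x h2
          exact ⟨.alt i10 i2x, .alt j' i2xp, .altDelay hx1' hx2,
            .altBoth hpj hq2, .altIntroL _ hle, ha⟩
        · exact ⟨.alt i10 i2x, j', .altDelay hx1' hx2, .altL hpj h2, hle, ha⟩
      · exact ⟨i10, j', .altChoiceL hx1' hn, hpj, hle, ha⟩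
    | altChoiceR hx2 hn1 =>
      obtain ⟨i20, j', hx2', hpj, hle, ha⟩ := ih2 hx2
      rcases noexpr_total i1 a with ⟨i1x, hx1⟩ | hn
      · by_cases h1 : Evades i1x lp
        · obtain ⟨i1xp, hq1⟩ := prune_total i1x h1
          exact ⟨.alt i1x i20, .alt i1xp j', .altDelay hx1 hx2',
            .altBoth hq1 hpj, .altIntroR _ hle, ha⟩
        · exact ⟨.alt i1x i20, j', .altDelay hx1 hx2', .altR hpj h1, hle, ha⟩
      · exact ⟨i20, j', .altChoiceR hx2' hn, hpj, hle, ha⟩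
    | altDelay hx1 hx2 =>
      obtain ⟨i10, j1', hx1', hpj1, hle1, ha⟩ := ih1 hx1
      obtain ⟨i20, j2', hx2', hpj2, hle2, _⟩ := ih2 hx2
      exact ⟨.alt i10 i20, .alt j1' j2', .altDelay hx1' hx2',
        .altBoth hpj1 hpj2, .alt hle1 hle2, ha⟩
  | strict hp1 hp2 ih1 ih2 =>
    intro a j hx; cases hx with
    | strictL hx1 =>
      obtain ⟨i10, j1', hx1', hpj1, hle1, ha⟩ := ih1 hx1
      exact ⟨.strict i10 _, .strict j1' _, .strictL hx1',
        .strict hpj1 hp2, .strict hle1 (.refl _), ha⟩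
    | strictR hx2 hev =>
      obtain ⟨i20, j2', hx2', hpj2, hle2, ha⟩ := ih2 hx2
      exact ⟨i20, j2', .strictR hx2' (prune_rev_evades hp1 hev), hpj2, hle2, ha⟩
  | cr hp1 hp2 ih1 ih2 =>
    rename_i i1 i2 i1p i2p ℓ' lp
    intro a j hx; cases hx with
    | crL hx1 =>
      obtain ⟨i10, j1', hx1', hpj1, hle1, ha⟩ := ih1 hx1
      exact ⟨.cr ℓ' i10 _, .cr ℓ' j1' _, .crL hx1',
        .cr hpj1 hp2, .cr ℓ' hle1 (.refl _), ha⟩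
    | crR hx2 hpc =>
      obtain ⟨i20, j2', hx2', hpj2, hle2, ha⟩ := ih2 hx2
      obtain ⟨w, w', hw, hw', hlew⟩ := prune_comm_seq hp1 hpc
      exact ⟨.cr ℓ' w i20, .cr ℓ' w' j2', .crR hx2' hw,
        .cr hw' hpj2, .cr ℓ' hlew hle2, ha⟩
  | loopS hp1 ih =>
    rename_i i1 i1p lp
    intro a j hx; cases hx with
    | loop hx1 =>
      obtain ⟨i10, j1', hx1', hpj1, hle1, ha⟩ := ih hx1
      exact ⟨.strict i10 (.loopS i1), .strict j1' (.loopS i1p), .loop hx1',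
        .strict hpj1 (.loopS hp1), .strict hle1 (.refl _), ha⟩
  | loopSElim _ => intro a j hx; cases hx

/-- Backward one-step simulation: an execution of the original interaction
with an action outside `ℓ` and an `ℓ`-evading remainder is matched by the
pruned interaction. -/
theorem prune_exec_bwd {i i0 : Interaction L M} {a : MyAction L M} {ℓ : Set L}
    (h : Exec i a i0) : ∀ {i' : Interaction L M}, Prune i ℓ i' →
      a.lifeline ∉ ℓ → Evades i0 ℓ →
      ∃ j j0, Exec i' a j ∧ Prune i0 ℓ j0 ∧ Le j0 j := by
  induction h with
  | act a =>
    intro i' hp _ _; cases hp with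
    | act _ _ _ => exact ⟨.empty, .empty, .act a, .empty _, .refl _⟩
  | loop hx1 ih =>
    rename_i i1 i1x a
    intro i' hp ha he; cases hp with
    | loopS hp1 =>
      rename_i i1p
      have h1x : Evades i1x ℓ := by cases he with | strict h1 _ => exact h1
      obtain ⟨j1, j01, hxj, hpj, hle⟩ := ih hp1 ha h1x
      exact ⟨.strict j1 (.loopS i1p), .strict j01 (.loopS i1p), .loop hxj,
        .strict hpj (.loopS hp1), .strict hle (.refl _)⟩
    | loopSElim hn1 =>
      have h1x : Evades i1x ℓ := by cases he with | strict h1 _ => exact h1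
      exact absurd (evades_of_exec hx1 ha h1x) hn1
  | strictL hx1 ih =>
    intro i' hp ha he; cases hp with
    | strict hp1 hp2 =>
      cases he with
      | strict h1 h2 =>
        obtain ⟨j1, j01, hxj, hpj, hle⟩ := ih hp1 ha h1
        exact ⟨.strict j1 _, .strict j01 _, .strictL hxj, .strict hpj hp2,
          .strict hle (.refl _)⟩
  | strictR hx2 hev ih =>
    intro i' hp ha he; cases hp with
    | strict hp1 hp2 =>
      obtain ⟨j2, j02, hxj, hpj, hle⟩ := ih hp2 ha he
      exact ⟨j2, j02, .strictR hxj (prune_evades_univ hp1 hev), hpj, hle⟩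
  | crL hx1 ih =>
    intro i' hp ha he; cases hp with
    | cr hp1 hp2 =>
      cases he with
      | cr h1 h2 =>
        obtain ⟨j1, j01, hxj, hpj, hle⟩ := ih hp1 ha h1
        exact ⟨.cr _ j1 _, .cr _ j01 _, .crL hxj, .cr hpj hp2,
          .cr _ hle (.refl _)⟩
  | crR hx2 hpc ih =>
    intro i' hp ha he; cases hp with
    | cr hp1 hp2 =>
      cases he with
      | cr h1 h2 =>
        obtain ⟨j2, j02, hxj, hpj, hle⟩ := ih hp2 ha h2
        obtain ⟨q, hq1, hq2⟩ := prune_comm hp1 hpc h1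
        exact ⟨.cr _ q j2, .cr _ q j02, .crR hxj hq1, .cr hq2 hpj,
          .cr _ (.refl _) hle⟩
  | altChoiceL hx1 hn2 ih =>
    intro i' hp ha he; cases hp with
    | altL hp1 _ => exact ih hp1 ha he
    | altR hp2 hn1 => exact absurd (evades_of_exec hx1 ha he) hn1
    | altBoth hp1 hp2 =>
      obtain ⟨j1, j01, hxj, hpj, hle⟩ := ih hp1 ha he
      exact ⟨j1, j01, .altChoiceL hxj (noexpr_prune hp2 hn2), hpj, hle⟩
  | altChoiceR hx2 hn1 ih =>
    intro i' hp ha he; cases hp with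
    | altR hp2 _ => exact ih hp2 ha he
    | altL hp1 hn2 => exact absurd (evades_of_exec hx2 ha he) hn2
    | altBoth hp1 hp2 =>
      obtain ⟨j2, j02, hxj, hpj, hle⟩ := ih hp2 ha he
      exact ⟨j2, j02, .altChoiceR hxj (noexpr_prune hp1 hn1), hpj, hle⟩
  | altDelay hx1 hx2 ih1 ih2 =>
    rename_i i1 i2 i1x i2x a
    intro i' hp ha he; cases hp with
    | altL hp1 hn2 =>
      have h2x : ¬ Evades i2x ℓ := fun hc => hn2 (evades_of_exec hx2 ha hc)
      have h1x : Evades i1x ℓ := by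
        cases he with
        | altL h => exact h
        | altR h => exact absurd h h2x
      obtain ⟨j1, j01, hxj, hpj, hle⟩ := ih1 hp1 ha h1x
      exact ⟨j1, j01, hxj, .altL hpj h2x, hle⟩
    | altR hp2 hn1 =>
      have h1x : ¬ Evades i1x ℓ := fun hc => hn1 (evades_of_exec hx1 ha hc)
      have h2x : Evades i2x ℓ := by
        cases he with
        | altL h => exact absurd h h1x
        | altR h => exact h
      obtain ⟨j2, j02, hxj, hpj, hle⟩ := ih2 hp2 ha h2x
      exact ⟨j2, j02, hxj, .altR hpj h1x, hle⟩
    | altBoth hp1 hp2 =>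
      rename_i i1p i2p
      by_cases h1x : Evades i1x ℓ <;> by_cases h2x : Evades i2x ℓ
      · obtain ⟨j1, j01, hxj1, hpj1, hle1⟩ := ih1 hp1 ha h1x
        obtain ⟨j2, j02, hxj2, hpj2, hle2⟩ := ih2 hp2 ha h2x
        exact ⟨.alt j1 j2, .alt j01 j02, .altDelay hxj1 hxj2,
          .altBoth hpj1 hpj2, .alt hle1 hle2⟩
      · obtain ⟨j1, j01, hxj1, hpj1, hle1⟩ := ih1 hp1 ha h1x
        rcases noexpr_total i2p a with ⟨j2, hxj2⟩ | hn
        · exact ⟨.alt j1 j2, j01, .altDelay hxj1 hxj2, .altL hpj1 h2x,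
            .altIntroL _ hle1⟩
        · exact ⟨j1, j01, .altChoiceL hxj1 hn, .altL hpj1 h2x, hle1⟩
      · obtain ⟨j2, j02, hxj2, hpj2, hle2⟩ := ih2 hp2 ha h2x
        rcases noexpr_total i1p a with ⟨j1, hxj1⟩ | hn
        · exact ⟨.alt j1 j2, j02, .altDelay hxj1 hxj2, .altR hpj2 h1x,
            .altIntroR _ hle2⟩
        · exact ⟨j2, j02, .altChoiceR hxj2 hn, .altR hpj2 h1x, hle2⟩
      · cases he with
        | altL h => exact absurd h h1x
        | altR h => exact absurd h h2x

/-- Traces of the pruned interaction are traces of the original avoiding `ℓ`. -/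
theorem prune_sem_fwd {ℓ : Set L} : ∀ (t : List (MyAction L M))
    (i i' : Interaction L M), Prune i ℓ i' → Sem i' t →
    Sem i t ∧ ∀ a ∈ t, a.lifeline ∉ ℓ := by
  intro t
  induction t with
  | nil =>
    intro i i' hp hs
    have he : Evades i' Set.univ := by
      cases hs with
      | nil he => exact he
    exact ⟨.nil (prune_rev_evades hp he), by simp⟩
  | cons a t ih =>
    intro i i' hp hs
    obtain ⟨j, hxj, hsj⟩ : ∃ j, Exec i' a j ∧ Sem j t := by
      cases hs with
      | cons hx hs => exact ⟨_, hx, hs⟩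
    obtain ⟨i0, j', hx0, hp0, hle, ha⟩ := prune_exec_fwd hp hxj
    obtain ⟨hs0, hav⟩ := ih i0 j' hp0 (le_sem hsj hle)
    refine ⟨.cons hx0 hs0, ?_⟩
    intro b hb
    rcases List.mem_cons.1 hb with rfl | hb
    · exact ha
    · exact hav b hb

/-- Traces of the original avoiding `ℓ` are traces of the pruned interaction. -/
theorem prune_sem_bwd {ℓ : Set L} : ∀ (t : List (MyAction L M))
    (i i' : Interaction L M), Prune i ℓ i' → Sem i t →
    (∀ a ∈ t, a.lifeline ∉ ℓ) → Sem i' t := by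
  intro t
  induction t with
  | nil =>
    intro i i' hp hs _
    have he : Evades i Set.univ := by
      cases hs with
      | nil he => exact he
    exact .nil (prune_evades_univ hp he)
  | cons a t ih =>
    intro i i' hp hs hav
    obtain ⟨i0, hx0, hs0⟩ : ∃ i0, Exec i a i0 ∧ Sem i0 t := by
      cases hs with
      | cons hx hs => exact ⟨_, hx, hs⟩
    have ha : a.lifeline ∉ ℓ := hav a List.mem_cons_self
    have hav' : ∀ b ∈ t, b.lifeline ∉ ℓ := fun b hb =>
      hav b (List.mem_cons_of_mem _ hb)
    have he0 : Evades i0 ℓ := sem_evades hs0 hav'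
    obtain ⟨j, j0, hxj, hpj, hle⟩ := prune_exec_bwd hx0 hp ha he0
    exact .cons hxj (le_sem (ih i0 j0 hpj hs0 hav') hle)

end Interaction

open Interaction

/-- if `i ⤳ℓ i'` then `σ(i')` is exactly the set of traces of `σ(i)`
all of whose actions occur outside `ℓ`. -/
theorem prune_sem {L M : Type} [Finite L] [Finite M] (ℓ : Set L)
    (i i' : Interaction L M) (h : Prune i ℓ i') :
    {t | Sem i' t} = {t | Sem i t ∧ ∀ a ∈ t, a.lifeline ∉ ℓ} := by
  ext t
  simp only [Set.mem_setOf_eq]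
  constructor
  · exact fun hs => prune_sem_fwd t i i' h hs
  · exact fun ⟨hs, hav⟩ => prune_sem_bwd t i i' h hs hav
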